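/- arXiv:1907.05991 — 6 statements merged into one kernel-verified Lean document; each statement's English description precedes it below -/
import Mathlib

section
/- Let A: X → Dists(Y), let f be convex with f(1)=0, and let λ₀, λ₁ ∈ Dists(X). For any coupling γ of λ₀ and λ₁, the f-divergence between the lifted output distributions satisfies D_f(A#(λ₀) ‖ A#(λ₁)) ≤ Σ_{(x₀,x₁) ∈ supp(γ)} γ[x₀,x₁] · D_f(A(x₀) ‖ A(x₁)). -/
open Finset Real

lemma jensen_persp {ι : Type*} (s : Finset ι) (f : ℝ → ℝ)
    (hconv : ConvexOn ℝ (Set.Ici 0) f)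
    (a b : ι → ℝ) (hb : ∀ i ∈ s, 0 < b i) (ha : ∀ i ∈ s, 0 ≤ a i) :
    (∑ i ∈ s, b i) * f ((∑ i ∈ s, a i) / (∑ i ∈ s, b i))
      ≤ ∑ i ∈ s, b i * f (a i / b i) := by
  rcases s.eq_empty_or_nonempty with rfl | hs
  · simp
  · set B := ∑ i ∈ s, b i with hB
    have hBpos : 0 < B := Finset.sum_pos hb hs
    have hw : ∑ i ∈ s, b i / B = 1 := by
      rw [← Finset.sum_div, ← hB, div_self hBpos.ne']
    have h := hconv.map_sum_le (t := s) (w := fun i => b i / B)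
      (p := fun i => a i / b i)
      (fun i hi => div_nonneg (hb i hi).le hBpos.le) hw
      (fun i hi => div_nonneg (ha i hi) (hb i hi).le)
    have hz : ∑ x ∈ s, b x / B * (a x / b x) = (∑ i ∈ s, a i) / B := by
      rw [Finset.sum_div]
      refine Finset.sum_congr rfl fun i hi => ?_
      have hbi : b i ≠ 0 := (hb i hi).ne'
      field_simp
    simp only [smul_eq_mul] at h
    rw [hz] at h
    calc B * f ((∑ i ∈ s, a i) / B) ≤ B * ∑ i ∈ s, b i / B * f (a i / b i) :=
          by exact mul_le_mul_of_nonneg_left h hBpos.le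
      _ = ∑ i ∈ s, b i * f (a i / b i) := by
          rw [Finset.mul_sum]
          refine Finset.sum_congr rfl fun i hi => ?_
          field_simp

/-- The f-divergence of lifted outputs is bounded by the coupling-average of
pointwise f-divergences. -/
theorem stmt3 {X Y : Type*} [Fintype X] [Fintype Y]
    (A : X → Y → ℝ)
    (hA0 : ∀ x y, 0 < A x y) (hA1 : ∀ x, ∑ y, A x y = 1)
    (f : ℝ → ℝ) (hconv : ConvexOn ℝ (Set.Ici 0) f)
    (hfnonneg : ∀ t, 0 ≤ t → 0 ≤ f t) (hf1 : f 1 = 0)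
    (l₀ l₁ : X → ℝ)
    (hl₀0 : ∀ x, 0 ≤ l₀ x) (hl₀1 : ∑ x, l₀ x = 1)
    (hl₁0 : ∀ x, 0 ≤ l₁ x) (hl₁1 : ∑ x, l₁ x = 1)
    (γ : X × X → ℝ) (hγ0 : ∀ p, 0 ≤ γ p)
    (hm0 : ∀ x₀, l₀ x₀ = ∑ x₁, γ (x₀, x₁))
    (hm1 : ∀ x₁, l₁ x₁ = ∑ x₀, γ (x₀, x₁)) :
    ∑ y, (∑ x, l₁ x * A x y) *
        f ((∑ x, l₀ x * A x y) / (∑ x, l₁ x * A x y))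
      ≤ ∑ p ∈ Finset.univ.filter (fun p : X × X => 0 < γ p),
          γ p * ∑ y, A p.2 y * f (A p.1 y / A p.2 y) := by
  set s := Finset.univ.filter (fun p : X × X => 0 < γ p) with hsdef
  have hγmem : ∀ p ∈ s, 0 < γ p := fun p hp => (Finset.mem_filter.mp hp).2
  have hγoff : ∀ p ∈ (Finset.univ : Finset (X × X)), p ∉ s → γ p = 0 := by
    intro p _ hp
    have : ¬ 0 < γ p := fun h => hp (Finset.mem_filter.mpr ⟨Finset.mem_univ _, h⟩)
    linarith [hγ0 p]
  have key0 : ∀ y, ∑ x, l₀ x * A x y = ∑ p ∈ s, γ p * A p.1 y := by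
    intro y
    have : ∑ x, l₀ x * A x y = ∑ p : X × X, γ p * A p.1 y := by
      rw [Fintype.sum_prod_type]
      refine Finset.sum_congr rfl fun x _ => ?_
      rw [hm0 x, Finset.sum_mul]
    rw [this]
    exact (Finset.sum_subset (Finset.subset_univ s)
      (fun p hp hns => by rw [hγoff p hp hns, zero_mul])).symm
  have key1 : ∀ y, ∑ x, l₁ x * A x y = ∑ p ∈ s, γ p * A p.2 y := by
    intro y
    have : ∑ x, l₁ x * A x y = ∑ p : X × X, γ p * A p.2 y := by
      rw [Fintype.sum_prod_type_right]
      refine Finset.sum_congr rfl fun x _ => ?_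
      rw [hm1 x, Finset.sum_mul]
    rw [this]
    exact (Finset.sum_subset (Finset.subset_univ s)
      (fun p hp hns => by rw [hγoff p hp hns, zero_mul])).symm
  calc ∑ y, (∑ x, l₁ x * A x y) * f ((∑ x, l₀ x * A x y) / (∑ x, l₁ x * A x y))
      ≤ ∑ y, ∑ p ∈ s, (γ p * A p.2 y) * f ((γ p * A p.1 y) / (γ p * A p.2 y)) := by
        refine Finset.sum_le_sum fun y _ => ?_
        rw [key0 y, key1 y]
        exact jensen_persp s f hconv _ _
          (fun p hp => mul_pos (hγmem p hp) (hA0 p.2 y))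
          (fun p hp => mul_nonneg (hγmem p hp).le (hA0 p.1 y).le)
    _ = ∑ p ∈ s, γ p * ∑ y, A p.2 y * f (A p.1 y / A p.2 y) := by
        rw [Finset.sum_comm]
        refine Finset.sum_congr rfl fun p hp => ?_
        rw [Finset.mul_sum]
        refine Finset.sum_congr rfl fun y _ => ?_
        rw [mul_div_mul_left _ _ (hγmem p hp).ne']
        ring
end

section
/- If a randomized algorithm A: X → Dists(Y) provides (ε, D_f)-DP with respect to an adjacency relation Φ (i.e., D_f(A(x)‖A(x')) ≤ ε and D_f(A(x')‖A(x)) ≤ ε for all (x,x') ∈ Φ), then for any pair of distributions (λ₀, λ₁) admitting a coupling γ with supp(γ) ⊆ Φ, we have D_f(A#(λ₀)‖A#(λ₁)) ≤ ε, i.e., A provides (ε, D_f)-distribution privacy with respect to the lifting of Φ. -/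
open Finset Real

lemma jensen_div {ι : Type*} (s : Finset ι) (f : ℝ → ℝ)
    (hconv : ConvexOn ℝ (Set.Ici 0) f)
    (a b : ι → ℝ) (ha : ∀ i ∈ s, 0 ≤ a i) (hb : ∀ i ∈ s, 0 ≤ b i)
    (hzero : ∀ i ∈ s, b i = 0 → a i = 0) (hpos : 0 < ∑ i ∈ s, b i) :
    (∑ i ∈ s, b i) * f ((∑ i ∈ s, a i) / (∑ i ∈ s, b i)) ≤
      ∑ i ∈ s, b i * f (a i / b i) := by
  set S := ∑ i ∈ s, b i with hS
  have hSne : S ≠ 0 := ne_of_gt hpos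
  have key := hconv.map_sum_le (t := s) (w := fun i => b i / S)
      (p := fun i => a i / b i)
      (fun i hi => div_nonneg (hb i hi) hpos.le)
      (by rw [← Finset.sum_div, div_self hSne])
      (fun i hi => div_nonneg (ha i hi) (hb i hi))
  have hsum : ∑ i ∈ s, (b i / S) • (a i / b i) = (∑ i ∈ s, a i) / S := by
    rw [Finset.sum_div]
    apply Finset.sum_congr rfl
    intro i hi
    rcases eq_or_ne (b i) 0 with h | h
    · simp [h, hzero i hi h]
    · field_simp
      rw [smul_eq_mul]
      field_simp
  rw [hsum] at key
  have := mul_le_mul_of_nonneg_left key hpos.le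
  calc S * f ((∑ i ∈ s, a i) / S) ≤ S * ∑ i ∈ s, (b i / S) • f (a i / b i) := this
    _ = ∑ i ∈ s, b i * f (a i / b i) := by
        rw [Finset.mul_sum]
        apply Finset.sum_congr rfl
        intro i hi
        simp only [smul_eq_mul]
        field_simp

/-- (ε, D_f)-DP implies (ε, D_f)-distribution privacy w.r.t. the lifting of Φ. -/
theorem stmt4 {X Y : Type*} [Fintype X] [Fintype Y]
    (A : X → Y → ℝ)
    (hA0 : ∀ x y, 0 < A x y) (hA1 : ∀ x, ∑ y, A x y = 1)
    (f : ℝ → ℝ) (hconv : ConvexOn ℝ (Set.Ici 0) f)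
    (hfnonneg : ∀ t, 0 ≤ t → 0 ≤ f t) (hf1 : f 1 = 0)
    (Φ : Set (X × X)) (ε : ℝ)
    (hDP : ∀ x x', (x, x') ∈ Φ →
        (∑ y, A x' y * f (A x y / A x' y)) ≤ ε ∧
        (∑ y, A x y * f (A x' y / A x y)) ≤ ε) :
    ∀ (l₀ l₁ : X → ℝ),
      (∀ x, 0 ≤ l₀ x) → (∑ x, l₀ x = 1) →
      (∀ x, 0 ≤ l₁ x) → (∑ x, l₁ x = 1) →
      ∀ γ : X × X → ℝ, (∀ p, 0 ≤ γ p) →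
        (∀ x₀, l₀ x₀ = ∑ x₁, γ (x₀, x₁)) →
        (∀ x₁, l₁ x₁ = ∑ x₀, γ (x₀, x₁)) →
        (∀ p, 0 < γ p → p ∈ Φ) →
        ∑ y, (∑ x, l₁ x * A x y) *
            f ((∑ x, l₀ x * A x y) / (∑ x, l₁ x * A x y)) ≤ ε := by
  intro l₀ l₁ hl₀ hl₀1 hl₁ hl₁1 γ hγ hm₀ hm₁ hsupp
  -- rewrite the mixtures as sums over pairs
  have h0 : ∀ y, ∑ x, l₀ x * A x y = ∑ p : X × X, γ p * A p.1 y := by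
    intro y
    rw [Fintype.sum_prod_type (f := fun p : X × X => γ p * A p.1 y)]
    apply Finset.sum_congr rfl
    intro x _
    rw [hm₀ x, Finset.sum_mul]
  have h1 : ∀ y, ∑ x, l₁ x * A x y = ∑ p : X × X, γ p * A p.2 y := by
    intro y
    calc ∑ x, l₁ x * A x y = ∑ x₁, ∑ x₀, γ (x₀, x₁) * A x₁ y := by
          apply Finset.sum_congr rfl
          intro x _
          rw [hm₁ x, Finset.sum_mul]
      _ = ∑ x₀, ∑ x₁, γ (x₀, x₁) * A x₁ y := Finset.sum_comm
      _ = ∑ p : X × X, γ p * A p.2 y :=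
          (Fintype.sum_prod_type (f := fun p : X × X => γ p * A p.2 y)).symm
  have hγsum : ∑ p : X × X, γ p = 1 := by
    rw [← hl₀1]
    rw [Fintype.sum_prod_type (f := γ)]
    exact Finset.sum_congr rfl fun x _ => (hm₀ x).symm
  have hBpos : ∀ y, 0 < ∑ x, l₁ x * A x y := by
    intro y
    obtain ⟨x, hx⟩ : ∃ x, l₁ x ≠ 0 := by
      by_contra h
      push_neg at h
      simp [h] at hl₁1
    have hxpos : 0 < l₁ x * A x y := mul_pos ((hl₁ x).lt_of_ne' hx) (hA0 x y)
    exact lt_of_lt_of_le hxpos (Finset.single_le_sum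
      (fun x _ => mul_nonneg (hl₁ x) (hA0 x y).le) (Finset.mem_univ x))
  have step1 : ∑ y, (∑ x, l₁ x * A x y) *
      f ((∑ x, l₀ x * A x y) / (∑ x, l₁ x * A x y)) ≤
      ∑ y, ∑ p : X × X, γ p * (A p.2 y * f (A p.1 y / A p.2 y)) := by
    apply Finset.sum_le_sum
    intro y _
    rw [h0 y, h1 y]
    have := jensen_div Finset.univ f hconv
        (fun p => γ p * A p.1 y) (fun p => γ p * A p.2 y)
        (fun p _ => mul_nonneg (hγ p) (hA0 p.1 y).le)
        (fun p _ => mul_nonneg (hγ p) (hA0 p.2 y).le)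
        (fun p _ h => by
          have : γ p = 0 := by
            rcases mul_eq_zero.mp h with h' | h'
            · exact h'
            · exact absurd h' (hA0 p.2 y).ne'
          simp [this])
        (by rw [← h1 y]; exact hBpos y)
    refine this.trans (le_of_eq (Finset.sum_congr rfl fun p _ => ?_))
    rcases eq_or_ne (γ p) 0 with h | h
    · simp [h]
    · rw [mul_div_mul_left _ _ h]
      ring
  have step2 : ∑ y, ∑ p : X × X, γ p * (A p.2 y * f (A p.1 y / A p.2 y)) =
      ∑ p : X × X, γ p * ∑ y, A p.2 y * f (A p.1 y / A p.2 y) := by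
    rw [Finset.sum_comm]
    exact Finset.sum_congr rfl fun p _ => (Finset.mul_sum _ _ _).symm
  have step3 : ∑ p : X × X, γ p * ∑ y, A p.2 y * f (A p.1 y / A p.2 y) ≤
      ∑ p : X × X, γ p * ε := by
    apply Finset.sum_le_sum
    intro p _
    rcases (hγ p).eq_or_lt with h | h
    · simp [← h]
    · exact mul_le_mul_of_nonneg_left
        ((hDP p.1 p.2 (hsupp p h)).1) h.le
  calc ∑ y, (∑ x, l₁ x * A x y) *
      f ((∑ x, l₀ x * A x y) / (∑ x, l₁ x * A x y))
      ≤ ∑ p : X × X, γ p * ε := by rw [step2] at step1; exact step1.trans step3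
    _ = ε := by rw [← Finset.sum_mul, hγsum, one_mul]
end

section
/- If A: X → Dists(Y) provides (ε, d, D_f)-extended DP with respect to Φ (i.e., D_f(A(x)‖A(x')) ≤ ε·d(x,x') for all (x,x') ∈ Φ), then for any pair of distributions (λ₀, λ₁) admitting a coupling γ with supp(γ) ⊆ Φ that attains the Earth mover's distance W₁(λ₀,λ₁) = Σ γ[x₀,x₁]·d(x₀,x₁), we have D_f(A#(λ₀)‖A#(λ₁)) ≤ ε · W₁(λ₀,λ₁). -/
open Finset Real

/-- (ε, d, D_f)-extended DP implies (ε, W₁, D_f)-extended distribution privacy: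
noise proportional to the Earth mover's distance suffices. -/
theorem stmt5 {X Y : Type*} [Fintype X] [Fintype Y]
    (d : X → X → ℝ)
    (hd0 : ∀ x x', 0 ≤ d x x') (hdrefl : ∀ x, d x x = 0)
    (hdsymm : ∀ x x', d x x' = d x' x)
    (hdtri : ∀ x x' x'', d x x'' ≤ d x x' + d x' x'')
    (A : X → Y → ℝ)
    (hA0 : ∀ x y, 0 < A x y) (hA1 : ∀ x, ∑ y, A x y = 1)
    (f : ℝ → ℝ) (hconv : ConvexOn ℝ (Set.Ici 0) f)
    (hfnonneg : ∀ t, 0 ≤ t → 0 ≤ f t) (hf1 : f 1 = 0)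
    (Φ : Set (X × X)) (ε : ℝ) (hε : 0 ≤ ε)
    (hXDP : ∀ x x', (x, x') ∈ Φ →
        (∑ y, A x' y * f (A x y / A x' y)) ≤ ε * d x x') :
    ∀ (l₀ l₁ : X → ℝ),
      (∀ x, 0 ≤ l₀ x) → (∑ x, l₀ x = 1) →
      (∀ x, 0 ≤ l₁ x) → (∑ x, l₁ x = 1) →
      ∀ γ : X × X → ℝ, (∀ p, 0 ≤ γ p) →
        (∀ x₀, l₀ x₀ = ∑ x₁, γ (x₀, x₁)) →
        (∀ x₁, l₁ x₁ = ∑ x₀, γ (x₀, x₁)) →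
        (∀ p, 0 < γ p → p ∈ Φ) →
        -- γ attains the Earth mover's distance W₁(l₀, l₁)
        (∀ γ' : X × X → ℝ, (∀ p, 0 ≤ γ' p) →
          (∀ x₀, l₀ x₀ = ∑ x₁, γ' (x₀, x₁)) →
          (∀ x₁, l₁ x₁ = ∑ x₀, γ' (x₀, x₁)) →
          (∑ p : X × X, d p.1 p.2 * γ p) ≤ ∑ p : X × X, d p.1 p.2 * γ' p) →
        ∑ y, (∑ x, l₁ x * A x y) *
            f ((∑ x, l₀ x * A x y) / (∑ x, l₁ x * A x y))
          ≤ ε * ∑ p : X × X, d p.1 p.2 * γ p := by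
  intro l₀ l₁ h₀ hs₀ h₁ hs₁ γ hγ hm₀ hm₁ hsupp _hmin
  -- marginal identities
  have hP : ∀ y, (∑ x, l₀ x * A x y) = ∑ p : X × X, γ p * A p.1 y := by
    intro y
    rw [Fintype.sum_prod_type]
    exact Finset.sum_congr rfl fun x _ => by rw [hm₀ x, Finset.sum_mul]
  have hQ : ∀ y, (∑ x, l₁ x * A x y) = ∑ p : X × X, γ p * A p.2 y := by
    intro y
    rw [Fintype.sum_prod_type, Finset.sum_comm]
    exact Finset.sum_congr rfl fun x _ => by rw [hm₁ x, Finset.sum_mul]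
  -- positivity of Q
  have hx1 : ∃ x, 0 < l₁ x := by
    by_contra h
    push_neg at h
    have : ∑ x, l₁ x = 0 :=
      Finset.sum_eq_zero fun x _ => le_antisymm (h x) (h₁ x)
    rw [hs₁] at this; norm_num at this
  have hQpos : ∀ y, 0 < ∑ x, l₁ x * A x y := by
    intro y
    obtain ⟨x₀, hx₀⟩ := hx1
    exact Finset.sum_pos' (fun x _ => mul_nonneg (h₁ x) (hA0 x y).le)
      ⟨x₀, Finset.mem_univ _, mul_pos hx₀ (hA0 x₀ y)⟩
  -- per-y Jensen
  have key : ∀ y, (∑ x, l₁ x * A x y) *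
      f ((∑ x, l₀ x * A x y) / (∑ x, l₁ x * A x y)) ≤
      ∑ p : X × X, γ p * (A p.2 y * f (A p.1 y / A p.2 y)) := by
    intro y
    set Qy := ∑ x, l₁ x * A x y with hQy
    have hQyp : 0 < Qy := hQpos y
    set w : X × X → ℝ := fun p => γ p * A p.2 y / Qy with hw
    have hw0 : ∀ p ∈ Finset.univ (α := X × X), 0 ≤ w p := fun p _ =>
      div_nonneg (mul_nonneg (hγ p) (hA0 _ y).le) hQyp.le
    have hw1 : ∑ p : X × X, w p = 1 := by
      rw [← Finset.sum_div, ← hQ y, div_self hQyp.ne']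
    have hmem : ∀ p ∈ Finset.univ (α := X × X),
        (A p.1 y / A p.2 y) ∈ Set.Ici (0:ℝ) :=
      fun p _ => div_nonneg (hA0 _ y).le (hA0 _ y).le
    have hsum : ∑ p : X × X, w p • (A p.1 y / A p.2 y)
        = (∑ x, l₀ x * A x y) / Qy := by
      rw [hP y, Finset.sum_div]
      refine Finset.sum_congr rfl fun p _ => ?_
      have hne : A p.2 y ≠ 0 := (hA0 _ y).ne'
      simp only [w, smul_eq_mul]
      field_simp
    have hJ := hconv.map_sum_le hw0 hw1 hmem
    rw [hsum] at hJ
    calc Qy * f ((∑ x, l₀ x * A x y) / Qy)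
        ≤ Qy * ∑ p : X × X, w p • f (A p.1 y / A p.2 y) :=
          mul_le_mul_of_nonneg_left hJ hQyp.le
      _ = ∑ p : X × X, γ p * (A p.2 y * f (A p.1 y / A p.2 y)) := by
          rw [Finset.mul_sum]
          refine Finset.sum_congr rfl fun p _ => ?_
          simp only [w, smul_eq_mul]
          field_simp
  calc ∑ y, (∑ x, l₁ x * A x y) *
        f ((∑ x, l₀ x * A x y) / (∑ x, l₁ x * A x y))
      ≤ ∑ y, ∑ p : X × X, γ p * (A p.2 y * f (A p.1 y / A p.2 y)) :=
        Finset.sum_le_sum fun y _ => key y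
    _ = ∑ p : X × X, γ p * ∑ y, A p.2 y * f (A p.1 y / A p.2 y) := by
        rw [Finset.sum_comm]
        exact Finset.sum_congr rfl fun p _ => by rw [Finset.mul_sum]
    _ ≤ ∑ p : X × X, γ p * (ε * d p.1 p.2) := by
        refine Finset.sum_le_sum fun p _ => ?_
        rcases lt_or_eq_of_le (hγ p) with h | h
        · exact mul_le_mul_of_nonneg_left (hXDP p.1 p.2 (hsupp p h)) (hγ p)
        · rw [← h]; ring_nf; exact le_refl _
    _ = ε * ∑ p : X × X, d p.1 p.2 * γ p := by
        rw [Finset.mul_sum]; exact Finset.sum_congr rfl fun p _ => by ring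
end

section
/- Sequential composition with shared input for KL-divergence DP: if A₀: X → Dists(Y₀) satisfies D_KL(A₀(x)‖A₀(x')) ≤ ε₀ for all (x,x') ∈ Φ, and for every y₀ ∈ Y₀ the algorithm A₁(y₀,·): X → Dists(Y₁) satisfies D_KL(A₁(y₀,x)‖A₁(y₀,x')) ≤ ε₁ for all (x,x') ∈ Φ, then the composition B(x)[y₁] = Σ_{y₀} A₀(x)[y₀]·A₁(y₀,x)[y₁] satisfies D_KL(B(x)‖B(x')) ≤ ε₀ + ε₁ for all (x,x') ∈ Φ. -/
open Finset Real

lemma log_sum_ineq {ι : Type*} (s : Finset ι) (hs : s.Nonempty) (a b : ι → ℝ)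
    (ha : ∀ i ∈ s, 0 < a i) (hb : ∀ i ∈ s, 0 < b i) :
    (∑ i ∈ s, a i) * Real.log ((∑ i ∈ s, a i) / (∑ i ∈ s, b i)) ≤
      ∑ i ∈ s, a i * Real.log (a i / b i) := by
  set A := ∑ i ∈ s, a i with hAdef
  set B := ∑ i ∈ s, b i with hBdef
  have hA : 0 < A := Finset.sum_pos ha hs
  have hB : 0 < B := Finset.sum_pos hb hs
  have key := Real.convexOn_mul_log.map_sum_le (t := s) (w := fun i => b i / B)
    (p := fun i => a i / b i)
    (fun i hi => div_nonneg (hb i hi).le hB.le)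
    (by rw [← Finset.sum_div, ← hBdef, div_self hB.ne'])
    (fun i hi => le_of_lt (div_pos (ha i hi) (hb i hi)))
  simp only [smul_eq_mul] at key
  have hsum : ∑ i ∈ s, (b i / B) * (a i / b i) = A / B := by
    rw [hAdef, Finset.sum_div]
    refine Finset.sum_congr rfl fun i hi => ?_
    have h1 := (hb i hi).ne'
    field_simp
  rw [hsum] at key
  have key2 := mul_le_mul_of_nonneg_left key hB.le
  calc A * Real.log (A / B) = B * (A / B * Real.log (A / B)) := by field_simp
    _ ≤ B * ∑ i ∈ s, b i / B * (a i / b i * Real.log (a i / b i)) := key2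
    _ = ∑ i ∈ s, a i * Real.log (a i / b i) := by
        rw [Finset.mul_sum]
        refine Finset.sum_congr rfl fun i hi => ?_
        have h1 := (hb i hi).ne'
        field_simp

/-- Sequential composition with shared input for KL-divergence DP. -/
theorem stmt9 {X Y₀ Y₁ : Type*} [Fintype Y₀] [Fintype Y₁]
    (A₀ : X → Y₀ → ℝ) (A₁ : Y₀ → X → Y₁ → ℝ)
    (hA₀ : ∀ x y, 0 < A₀ x y) (hA₀1 : ∀ x, ∑ y, A₀ x y = 1)
    (hA₁ : ∀ y₀ x y, 0 < A₁ y₀ x y) (hA₁1 : ∀ y₀ x, ∑ y, A₁ y₀ x y = 1)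
    (Φ : Set (X × X)) (ε₀ ε₁ : ℝ)
    (h0 : ∀ x x', (x, x') ∈ Φ →
        ∑ y, A₀ x y * Real.log (A₀ x y / A₀ x' y) ≤ ε₀)
    (h1 : ∀ y₀ x x', (x, x') ∈ Φ →
        ∑ y, A₁ y₀ x y * Real.log (A₁ y₀ x y / A₁ y₀ x' y) ≤ ε₁) :
    ∀ x x', (x, x') ∈ Φ →
      ∑ y₁, (∑ y₀, A₀ x y₀ * A₁ y₀ x y₁) *
          Real.log ((∑ y₀, A₀ x y₀ * A₁ y₀ x y₁) /
                    (∑ y₀, A₀ x' y₀ * A₁ y₀ x' y₁))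
        ≤ ε₀ + ε₁ := by
  intro x x' hxx
  have hY₀ : (Finset.univ : Finset Y₀).Nonempty :=
    Finset.nonempty_of_sum_ne_zero (by rw [hA₀1 x]; exact one_ne_zero)
  have step1 : ∑ y₁, (∑ y₀, A₀ x y₀ * A₁ y₀ x y₁) *
          Real.log ((∑ y₀, A₀ x y₀ * A₁ y₀ x y₁) /
                    (∑ y₀, A₀ x' y₀ * A₁ y₀ x' y₁)) ≤
      ∑ y₁, ∑ y₀, (A₀ x y₀ * A₁ y₀ x y₁) *
          Real.log ((A₀ x y₀ * A₁ y₀ x y₁) / (A₀ x' y₀ * A₁ y₀ x' y₁)) := by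
    refine Finset.sum_le_sum fun y₁ _ => ?_
    exact log_sum_ineq univ hY₀ _ _
      (fun y₀ _ => mul_pos (hA₀ x y₀) (hA₁ y₀ x y₁))
      (fun y₀ _ => mul_pos (hA₀ x' y₀) (hA₁ y₀ x' y₁))
  refine step1.trans ?_
  rw [Finset.sum_comm]
  have step2 : ∀ y₀ : Y₀, ∑ y₁, (A₀ x y₀ * A₁ y₀ x y₁) *
          Real.log ((A₀ x y₀ * A₁ y₀ x y₁) / (A₀ x' y₀ * A₁ y₀ x' y₁)) =
      A₀ x y₀ * Real.log (A₀ x y₀ / A₀ x' y₀) +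
        A₀ x y₀ * ∑ y₁, A₁ y₀ x y₁ * Real.log (A₁ y₀ x y₁ / A₁ y₀ x' y₁) := by
    intro y₀
    have hlog : ∀ y₁ : Y₁, Real.log ((A₀ x y₀ * A₁ y₀ x y₁) / (A₀ x' y₀ * A₁ y₀ x' y₁)) =
        Real.log (A₀ x y₀ / A₀ x' y₀) + Real.log (A₁ y₀ x y₁ / A₁ y₀ x' y₁) := by
      intro y₁
      rw [← div_mul_div_comm, Real.log_mul
        (div_pos (hA₀ x y₀) (hA₀ x' y₀)).ne'
        (div_pos (hA₁ y₀ x y₁) (hA₁ y₀ x' y₁)).ne']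
    simp only [hlog, mul_add]
    rw [Finset.sum_add_distrib]
    congr 1
    · rw [← Finset.sum_mul, ← Finset.mul_sum, hA₁1, mul_one]
    · rw [Finset.mul_sum]
      exact Finset.sum_congr rfl fun y₁ _ => by ring
  simp only [step2]
  rw [Finset.sum_add_distrib]
  refine add_le_add (h0 x x' hxx) ?_
  calc ∑ y₀, A₀ x y₀ * ∑ y₁, A₁ y₀ x y₁ * Real.log (A₁ y₀ x y₁ / A₁ y₀ x' y₁)
      ≤ ∑ y₀, A₀ x y₀ * ε₁ :=
        Finset.sum_le_sum fun y₀ _ =>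
          mul_le_mul_of_nonneg_left (h1 y₀ x x' hxx) (hA₀ x y₀).le
    _ = ε₁ := by rw [← Finset.sum_mul, hA₀1, one_mul]
end

section
/- Distribution privacy of the coupling mechanism under approximate knowledge (max-divergence bound): suppose for s ∈ {0,1}, λ_s and λ̂_s are full-support distributions on X with e^{-ε} ≤ λ_s[x]/λ̂_s[x] ≤ e^{ε} for all x, γ_s is a coupling of λ̂_s and μ, and CP_s(x)[y] = γ_s[x,y]/λ̂_s[x]. Then for every subset R ⊆ Y with μ[R] > 0, CP_0#(λ_0)[R] ≤ e^{2ε} · CP_1#(λ_1)[R]. -/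
open Finset Real

/-- Max-divergence distribution privacy of the coupling mechanism under
approximate knowledge of the input distributions. -/
theorem stmt14 {X Y : Type*} [Fintype X] [Fintype Y]
    (μ : Y → ℝ) (hμ0 : ∀ y, 0 ≤ μ y) (hμ1 : ∑ y, μ y = 1)
    (ε : ℝ) (hε : 0 ≤ ε)
    (l₀ lh₀ l₁ lh₁ : X → ℝ)
    (hl₀ : ∀ x, 0 < l₀ x) (hl₀1 : ∑ x, l₀ x = 1)
    (hlh₀ : ∀ x, 0 < lh₀ x) (hlh₀1 : ∑ x, lh₀ x = 1)
    (hl₁ : ∀ x, 0 < l₁ x) (hl₁1 : ∑ x, l₁ x = 1)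
    (hlh₁ : ∀ x, 0 < lh₁ x) (hlh₁1 : ∑ x, lh₁ x = 1)
    (hratio₀ : ∀ x, Real.exp (-ε) ≤ l₀ x / lh₀ x ∧ l₀ x / lh₀ x ≤ Real.exp ε)
    (hratio₁ : ∀ x, Real.exp (-ε) ≤ l₁ x / lh₁ x ∧ l₁ x / lh₁ x ≤ Real.exp ε)
    (γ₀ γ₁ : X × Y → ℝ) (hγ₀0 : ∀ p, 0 ≤ γ₀ p) (hγ₁0 : ∀ p, 0 ≤ γ₁ p)
    (hγ₀m0 : ∀ x, lh₀ x = ∑ y, γ₀ (x, y)) (hγ₀m1 : ∀ y, μ y = ∑ x, γ₀ (x, y))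
    (hγ₁m0 : ∀ x, lh₁ x = ∑ y, γ₁ (x, y)) (hγ₁m1 : ∀ y, μ y = ∑ x, γ₁ (x, y)) :
    ∀ R : Finset Y, 0 < ∑ y ∈ R, μ y →
      (∑ x, ∑ y ∈ R, l₀ x * (γ₀ (x, y) / lh₀ x))
        ≤ Real.exp (2 * ε) * ∑ x, ∑ y ∈ R, l₁ x * (γ₁ (x, y) / lh₁ x) := by
  intro R _
  have hub : (∑ x, ∑ y ∈ R, l₀ x * (γ₀ (x, y) / lh₀ x))
      ≤ Real.exp ε * ∑ y ∈ R, μ y := by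
    have : ∀ x, ∑ y ∈ R, l₀ x * (γ₀ (x, y) / lh₀ x)
        ≤ Real.exp ε * ∑ y ∈ R, γ₀ (x, y) := by
      intro x
      rw [Finset.mul_sum]
      refine Finset.sum_le_sum fun y _ => ?_
      have h := (hratio₀ x).2
      have : l₀ x * (γ₀ (x, y) / lh₀ x) = (l₀ x / lh₀ x) * γ₀ (x, y) := by ring
      rw [this]
      exact mul_le_mul_of_nonneg_right h (hγ₀0 _) |>.trans_eq rfl
    calc (∑ x, ∑ y ∈ R, l₀ x * (γ₀ (x, y) / lh₀ x))
        ≤ ∑ x, Real.exp ε * ∑ y ∈ R, γ₀ (x, y) := Finset.sum_le_sum fun x _ => this x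
      _ = Real.exp ε * ∑ y ∈ R, μ y := by
          rw [← Finset.mul_sum, Finset.sum_comm]
          congr 1
          exact Finset.sum_congr rfl fun y _ => (hγ₀m1 y).symm
  have hlb : Real.exp (-ε) * ∑ y ∈ R, μ y
      ≤ ∑ x, ∑ y ∈ R, l₁ x * (γ₁ (x, y) / lh₁ x) := by
    have : ∀ x, Real.exp (-ε) * ∑ y ∈ R, γ₁ (x, y)
        ≤ ∑ y ∈ R, l₁ x * (γ₁ (x, y) / lh₁ x) := by
      intro x
      rw [Finset.mul_sum]
      refine Finset.sum_le_sum fun y _ => ?_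
      have h := (hratio₁ x).1
      have heq : l₁ x * (γ₁ (x, y) / lh₁ x) = (l₁ x / lh₁ x) * γ₁ (x, y) := by ring
      rw [heq]
      exact mul_le_mul_of_nonneg_right h (hγ₁0 _)
    calc Real.exp (-ε) * ∑ y ∈ R, μ y
        = ∑ x, Real.exp (-ε) * ∑ y ∈ R, γ₁ (x, y) := by
          rw [← Finset.mul_sum, Finset.sum_comm]
          congr 1
          exact Finset.sum_congr rfl fun y _ => hγ₁m1 y
      _ ≤ _ := Finset.sum_le_sum fun x _ => this x
  calc (∑ x, ∑ y ∈ R, l₀ x * (γ₀ (x, y) / lh₀ x))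
      ≤ Real.exp ε * ∑ y ∈ R, μ y := hub
    _ = Real.exp (2 * ε) * (Real.exp (-ε) * ∑ y ∈ R, μ y) := by
        rw [← mul_assoc, ← Real.exp_add]; ring_nf
    _ ≤ Real.exp (2 * ε) * ∑ x, ∑ y ∈ R, l₁ x * (γ₁ (x, y) / lh₁ x) :=
        mul_le_mul_of_nonneg_left hlb (Real.exp_pos _).le
end

section
/- KL distribution privacy of the coupling mechanism: under the assumptions that e^{-ε} ≤ λ_s[x]/λ̂_s[x] ≤ e^{ε} for s ∈ {0,1} and all x, with CP_s(x)[y] = γ_s[x,y]/λ̂_s[x] for couplings γ_s of λ̂_s and μ, the KL divergence satisfies D_KL(CP_0#(λ_0) ‖ CP_1#(λ_1)) ≤ 2ε·e^{ε}. -/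
open Finset Real

/-- KL-divergence distribution privacy of the coupling mechanism. -/
theorem stmt15 {X Y : Type*} [Fintype X] [Fintype Y]
    (μ : Y → ℝ) (hμ0 : ∀ y, 0 < μ y) (hμ1 : ∑ y, μ y = 1)
    (ε : ℝ) (hε : 0 ≤ ε)
    (l₀ lh₀ l₁ lh₁ : X → ℝ)
    (hl₀ : ∀ x, 0 < l₀ x) (hl₀1 : ∑ x, l₀ x = 1)
    (hlh₀ : ∀ x, 0 < lh₀ x) (hlh₀1 : ∑ x, lh₀ x = 1)
    (hl₁ : ∀ x, 0 < l₁ x) (hl₁1 : ∑ x, l₁ x = 1)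
    (hlh₁ : ∀ x, 0 < lh₁ x) (hlh₁1 : ∑ x, lh₁ x = 1)
    (hratio₀ : ∀ x, Real.exp (-ε) ≤ l₀ x / lh₀ x ∧ l₀ x / lh₀ x ≤ Real.exp ε)
    (hratio₁ : ∀ x, Real.exp (-ε) ≤ l₁ x / lh₁ x ∧ l₁ x / lh₁ x ≤ Real.exp ε)
    (γ₀ γ₁ : X × Y → ℝ) (hγ₀0 : ∀ p, 0 ≤ γ₀ p) (hγ₁0 : ∀ p, 0 ≤ γ₁ p)
    (hγ₀m0 : ∀ x, lh₀ x = ∑ y, γ₀ (x, y)) (hγ₀m1 : ∀ y, μ y = ∑ x, γ₀ (x, y))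
    (hγ₁m0 : ∀ x, lh₁ x = ∑ y, γ₁ (x, y)) (hγ₁m1 : ∀ y, μ y = ∑ x, γ₁ (x, y)) :
    ∑ y, (∑ x, l₀ x * (γ₀ (x, y) / lh₀ x)) *
        Real.log ((∑ x, l₀ x * (γ₀ (x, y) / lh₀ x)) /
                  (∑ x, l₁ x * (γ₁ (x, y) / lh₁ x)))
      ≤ 2 * ε * Real.exp ε := by
  set ν₀ : Y → ℝ := fun y => ∑ x, l₀ x * (γ₀ (x, y) / lh₀ x) with hν₀def
  set ν₁ : Y → ℝ := fun y => ∑ x, l₁ x * (γ₁ (x, y) / lh₁ x) with hν₁def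
  have hterm : ∀ x y, l₀ x * (γ₀ (x, y) / lh₀ x) = (l₀ x / lh₀ x) * γ₀ (x, y) := by
    intro x y; field_simp
  have hterm1 : ∀ x y, l₁ x * (γ₁ (x, y) / lh₁ x) = (l₁ x / lh₁ x) * γ₁ (x, y) := by
    intro x y; field_simp
  have hν₀nn : ∀ y, 0 ≤ ν₀ y := by
    intro y
    apply Finset.sum_nonneg
    intro x _
    rw [hterm]
    exact mul_nonneg (le_trans (Real.exp_pos _).le (hratio₀ x).1) (hγ₀0 _)
  have hν₀ub : ∀ y, ν₀ y ≤ Real.exp ε * μ y := by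
    intro y
    calc ν₀ y = ∑ x, (l₀ x / lh₀ x) * γ₀ (x, y) := by
          simp only [hν₀def]; exact Finset.sum_congr rfl fun x _ => hterm x y
      _ ≤ ∑ x, Real.exp ε * γ₀ (x, y) := by
          apply Finset.sum_le_sum
          intro x _
          exact mul_le_mul_of_nonneg_right (hratio₀ x).2 (hγ₀0 _)
      _ = Real.exp ε * μ y := by rw [← Finset.mul_sum, ← hγ₀m1]
  have hν₁lb : ∀ y, Real.exp (-ε) * μ y ≤ ν₁ y := by
    intro y
    calc Real.exp (-ε) * μ y = ∑ x, Real.exp (-ε) * γ₁ (x, y) := by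
          rw [← Finset.mul_sum, ← hγ₁m1]
      _ ≤ ∑ x, (l₁ x / lh₁ x) * γ₁ (x, y) := by
          apply Finset.sum_le_sum
          intro x _
          exact mul_le_mul_of_nonneg_right (hratio₁ x).1 (hγ₁0 _)
      _ = ν₁ y := by
          simp only [hν₁def]; exact (Finset.sum_congr rfl fun x _ => (hterm1 x y).symm)
  have hν₁pos : ∀ y, 0 < ν₁ y := fun y =>
    lt_of_lt_of_le (mul_pos (Real.exp_pos _) (hμ0 y)) (hν₁lb y)
  have hsum : ∑ y, ν₀ y = 1 := by
    have : ∑ y, ν₀ y = ∑ x, (l₀ x / lh₀ x) * ∑ y, γ₀ (x, y) := by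
      rw [Finset.sum_comm (f := fun y x => l₀ x * (γ₀ (x, y) / lh₀ x))]
      exact Finset.sum_congr rfl fun x _ => by
        rw [Finset.mul_sum]; exact Finset.sum_congr rfl fun y _ => hterm x y
    rw [this]
    have : ∀ x, (l₀ x / lh₀ x) * ∑ y, γ₀ (x, y) = l₀ x := by
      intro x
      rw [← hγ₀m0]
      field_simp
      exact mul_div_cancel_right₀ _ (hlh₀ x).ne'
    rw [Finset.sum_congr rfl fun x _ => this x, hl₀1]
  have key : ∀ y, ν₀ y * Real.log (ν₀ y / ν₁ y) ≤ 2 * ε * ν₀ y := by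
    intro y
    rcases eq_or_lt_of_le (hν₀nn y) with h0 | h0
    · rw [← h0]; simp
    · have hrat : ν₀ y / ν₁ y ≤ Real.exp (2 * ε) := by
        rw [div_le_iff₀ (hν₁pos y)]
        calc ν₀ y ≤ Real.exp ε * μ y := hν₀ub y
          _ = Real.exp (2 * ε) * (Real.exp (-ε) * μ y) := by
              rw [← mul_assoc, ← Real.exp_add]; ring_nf
          _ ≤ Real.exp (2 * ε) * ν₁ y :=
              mul_le_mul_of_nonneg_left (hν₁lb y) (Real.exp_pos _).le
      have hlog : Real.log (ν₀ y / ν₁ y) ≤ 2 * ε := by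
        calc Real.log (ν₀ y / ν₁ y) ≤ Real.log (Real.exp (2 * ε)) :=
              Real.log_le_log (div_pos h0 (hν₁pos y)) hrat
          _ = 2 * ε := Real.log_exp _
      calc ν₀ y * Real.log (ν₀ y / ν₁ y) ≤ ν₀ y * (2 * ε) :=
            mul_le_mul_of_nonneg_left hlog h0.le
        _ = 2 * ε * ν₀ y := by ring
  calc ∑ y, ν₀ y * Real.log (ν₀ y / ν₁ y) ≤ ∑ y, 2 * ε * ν₀ y :=
        Finset.sum_le_sum fun y _ => key y
    _ = 2 * ε := by rw [← Finset.mul_sum, hsum, mul_one]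
    _ ≤ 2 * ε * Real.exp ε := by
        nlinarith [Real.one_le_exp hε]
end
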